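/- Let M be an n×n Hermitian matrix, and let (λ₁, v₁), …, (λ_k, v_k) be approximate eigenpairs such that v₁, …, v_k are orthonormal and ‖Mvᵢ - λᵢvᵢ‖ ≤ ε for all i. Then there exist k eigenvalues ν₁, …, ν_k of M (counted with multiplicity) such that |λᵢ - νᵢ| ≤ 2√k·ε for all i. -/

import Mathlib

open scoped InnerProductSpace
open Matrix

/-- If `v₁, …, v_k` are orthonormal approximate eigenvectors of a Hermitian matrix `M`
with approximate eigenvalues `λᵢ` and error `ε`, then there are `k` eigenvalues of `M`
(counted with multiplicity) within `2√k ε` of the `λᵢ`. -/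
theorem hermitian_approx_eigenpairs (n k : ℕ) (M : Matrix (Fin n) (Fin n) ℂ)
    (hM : M.IsHermitian) (v : Fin k → EuclideanSpace ℂ (Fin n))
    (hv : Orthonormal ℂ v) (lam : Fin k → ℝ) (ε : ℝ) (hε : 0 ≤ ε)
    (happrox : ∀ i, ‖Matrix.toEuclideanLin M (v i) - (lam i : ℂ) • v i‖ ≤ ε) :
    ∃ f : Fin k → Fin n, Function.Injective f ∧
      ∀ i, |lam i - hM.eigenvalues (f i)| ≤ 2 * Real.sqrt k * ε := by
  rcases Nat.eq_zero_or_pos k with hk | hk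
  · subst hk
    exact ⟨fun i => i.elim0, fun i => i.elim0, fun i => i.elim0⟩
  classical
  set δ : ℝ := 2 * Real.sqrt k * ε with hδ
  have hδnn : 0 ≤ δ := by positivity
  set u := hM.eigenvectorBasis with hu
  set ν := hM.eigenvalues with hν
  set A := Matrix.toEuclideanLin M with hA
  have hsymm : (Matrix.toEuclideanLin M).IsSymmetric :=
    Matrix.isHermitian_iff_isSymmetric.mp hM
  have hAu : ∀ j, A (u j) = (ν j : ℂ) • u j := by
    intro j
    have h := hM.mulVec_eigenvectorBasis j
    ext i
    have : (A (u j)) i = (M *ᵥ ⇑(u j)) i := rfl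
    rw [this, h]
    simp [Pi.smul_apply]
    rfl
  have hrepr : ∀ (x : EuclideanSpace ℂ (Fin n)) (j : Fin n),
      u.repr (A x) j = (ν j : ℂ) * u.repr x j := by
    intro x j
    rw [u.repr_apply_apply, u.repr_apply_apply]
    calc ⟪u j, A x⟫_ℂ = ⟪A (u j), x⟫_ℂ := (hsymm (u j) x).symm
    _ = ⟪(ν j : ℂ) • u j, x⟫_ℂ := by rw [hAu]
    _ = (ν j : ℂ) * ⟪u j, x⟫_ℂ := by
        rw [inner_smul_left, Complex.conj_ofReal]
  -- coefficients
  set a : Fin k → Fin n → ℂ := fun i j => u.repr (v i) j with ha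
  have hnormsq : ∀ y : EuclideanSpace ℂ (Fin n), ‖y‖ ^ 2 = ∑ j, ‖u.repr y j‖ ^ 2 := by
    intro y
    rw [← u.repr.norm_map y, EuclideanSpace.norm_eq, Real.sq_sqrt]
    positivity
  have hresid : ∀ i, ∑ j, (ν j - lam i) ^ 2 * ‖a i j‖ ^ 2 ≤ ε ^ 2 := by
    intro i
    have h1 : ‖A (v i) - (lam i : ℂ) • v i‖ ^ 2 ≤ ε ^ 2 := by
      have := happrox i
      nlinarith [norm_nonneg (A (v i) - (lam i : ℂ) • v i)]
    rw [hnormsq] at h1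
    refine le_trans (le_of_eq ?_) h1
    refine Finset.sum_congr rfl fun j _ => ?_
    have h2 : u.repr (A (v i) - (lam i : ℂ) • v i) j
        = ((ν j - lam i : ℝ) : ℂ) * a i j := by
      rw [map_sub, _root_.map_smul]
      simp only [PiLp.sub_apply, PiLp.smul_apply, smul_eq_mul, hrepr]
      push_cast
      ring
    rw [h2, norm_mul, mul_pow, Complex.norm_real, Real.norm_eq_abs, sq_abs]
  have hsum1 : ∀ i, ∑ j, ‖a i j‖ ^ 2 = 1 := by
    intro i
    have := hnormsq (v i)
    rw [hv.1 i, one_pow] at this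
    exact this.symm
  have hbessel : ∀ j, ∑ i, ‖a i j‖ ^ 2 ≤ 1 := by
    intro j
    have h := hv.sum_inner_products_le (u j) (s := Finset.univ)
    rw [u.orthonormal.1 j, one_pow] at h
    refine le_trans (le_of_eq ?_) h
    refine Finset.sum_congr rfl fun i _ => ?_
    rw [ha]
    simp only []
    rw [u.repr_apply_apply, ← norm_inner_symm]
  -- the candidate sets
  set S : Fin k → Finset (Fin n) := fun i => Finset.univ.filter fun j => |lam i - ν j| ≤ δ
    with hS
  -- far mass is small
  have hfar : ∀ i, ∑ j ∈ (S i)ᶜ, ‖a i j‖ ^ 2 ≤ 1 / (4 * k) := by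
    intro i
    rcases eq_or_lt_of_le hε with hε0 | hε0
    · -- ε = 0 : all far coefficients vanish
      have h0 : ∑ j, (ν j - lam i) ^ 2 * ‖a i j‖ ^ 2 ≤ 0 := by
        simpa [← hε0] using hresid i
      have hz : ∀ j ∈ (Finset.univ : Finset (Fin n)),
          (ν j - lam i) ^ 2 * ‖a i j‖ ^ 2 = 0 := by
        rw [← Finset.sum_eq_zero_iff_of_nonneg (fun j _ => by positivity)]
        exact le_antisymm h0 (Finset.sum_nonneg fun j _ => by positivity)
      have : ∑ j ∈ (S i)ᶜ, ‖a i j‖ ^ 2 = 0 := by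
        refine Finset.sum_eq_zero fun j hj => ?_
        have hjS : ¬ |lam i - ν j| ≤ δ := by
          simp only [hS, Finset.mem_compl, Finset.mem_filter, Finset.mem_univ,
            true_and] at hj
          exact hj
        have hne : (ν j - lam i) ^ 2 ≠ 0 := by
          have : 0 < |lam i - ν j| := lt_of_le_of_lt hδnn (lt_of_not_ge hjS)
          have : lam i - ν j ≠ 0 := fun h => by simp [h] at this
          intro h
          exact this (by nlinarith [sq_abs (ν j - lam i)])
        have := hz j (Finset.mem_univ j)
        rcases mul_eq_zero.mp this with h | h
        · exact absurd h hne
        · exact h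
      rw [this]
      positivity
    · -- ε > 0
      have hδpos : 0 < δ := by
        rw [hδ]
        have : 0 < Real.sqrt k := Real.sqrt_pos.mpr (by exact_mod_cast hk)
        positivity
      have hδsq : δ ^ 2 = 4 * k * ε ^ 2 := by
        rw [hδ]
        rw [mul_pow, mul_pow, Real.sq_sqrt (by positivity : (0:ℝ) ≤ (k:ℝ))]
        ring
      have key : δ ^ 2 * ∑ j ∈ (S i)ᶜ, ‖a i j‖ ^ 2 ≤ ε ^ 2 := by
        rw [Finset.mul_sum]
        refine le_trans ?_ (hresid i)
        refine le_trans (Finset.sum_le_sum fun j hj => ?_)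
          (Finset.sum_le_sum_of_subset_of_nonneg (Finset.subset_univ _)
            fun j _ _ => by positivity)
        have hjS : ¬ |lam i - ν j| ≤ δ := by
          simp only [hS, Finset.mem_compl, Finset.mem_filter, Finset.mem_univ,
            true_and] at hj
          exact hj
        have h1 : δ ≤ |lam i - ν j| := le_of_lt (lt_of_not_ge hjS)
        have h2 : δ ^ 2 ≤ (ν j - lam i) ^ 2 := by
          nlinarith [sq_abs (lam i - ν j), abs_nonneg (lam i - ν j)]
        exact mul_le_mul_of_nonneg_right h2 (by positivity)
      have hk' : (0:ℝ) < 4 * k := by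
        have : (0:ℝ) < k := by exact_mod_cast hk
        linarith
      have : ∑ j ∈ (S i)ᶜ, ‖a i j‖ ^ 2 ≤ ε ^ 2 / δ ^ 2 := by
        rw [le_div_iff₀ (by positivity)]
        linarith [key]
      calc ∑ j ∈ (S i)ᶜ, ‖a i j‖ ^ 2 ≤ ε ^ 2 / δ ^ 2 := this
        _ = 1 / (4 * k) := by
            rw [hδsq, div_eq_div_iff (by positivity) (by positivity)]
            ring
  -- Hall's condition
  have hall : ∀ s : Finset (Fin k), s.card ≤ (s.biUnion S).card := by
    intro s
    by_contra hcon
    push_neg at hcon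
    set B := s.biUnion S with hB
    have hnear : ∀ i, 1 - 1 / (4 * k) ≤ ∑ j ∈ S i, ‖a i j‖ ^ 2 := by
      intro i
      have hsplit : ∑ j ∈ S i, ‖a i j‖ ^ 2 + ∑ j ∈ (S i)ᶜ, ‖a i j‖ ^ 2 = 1 := by
        rw [Finset.sum_add_sum_compl, hsum1]
      linarith [hfar i]
    have hlow : (s.card : ℝ) * (1 - 1 / (4 * k)) ≤ ∑ i ∈ s, ∑ j ∈ B, ‖a i j‖ ^ 2 := by
      calc (s.card : ℝ) * (1 - 1 / (4 * k)) = ∑ _i ∈ s, ((1:ℝ) - 1 / (4 * k)) := by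
            rw [Finset.sum_const, nsmul_eq_mul]
        _ ≤ ∑ i ∈ s, ∑ j ∈ S i, ‖a i j‖ ^ 2 := Finset.sum_le_sum fun i _ => hnear i
        _ ≤ ∑ i ∈ s, ∑ j ∈ B, ‖a i j‖ ^ 2 := by
            refine Finset.sum_le_sum fun i hi => ?_
            exact Finset.sum_le_sum_of_subset_of_nonneg
              (Finset.subset_biUnion_of_mem S hi) fun j _ _ => by positivity
    have hhigh : ∑ i ∈ s, ∑ j ∈ B, ‖a i j‖ ^ 2 ≤ (B.card : ℝ) := by
      rw [Finset.sum_comm]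
      calc ∑ j ∈ B, ∑ i ∈ s, ‖a i j‖ ^ 2
          ≤ ∑ j ∈ B, (1:ℝ) := by
            refine Finset.sum_le_sum fun j _ => ?_
            refine le_trans (Finset.sum_le_sum_of_subset_of_nonneg
              (Finset.subset_univ s) fun i _ _ => by positivity) (hbessel j)
        _ = B.card := by rw [Finset.sum_const, nsmul_eq_mul, mul_one]
    have hcardk : (s.card : ℝ) ≤ k := by
      exact_mod_cast le_trans (Finset.card_le_univ s) (le_of_eq (Finset.card_univ.trans
        (Fintype.card_fin k)))
    have hk' : (0:ℝ) < k := by exact_mod_cast hk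
    have hBs : (B.card : ℝ) + 1 ≤ s.card := by exact_mod_cast hcon
    have h4 : (s.card : ℝ) / (4 * k) ≤ 1 / 4 := by
      rw [div_le_div_iff₀ (by positivity) (by norm_num)]
      linarith
    have hfin := le_trans hlow hhigh
    have hexp : (s.card : ℝ) * (1 - 1 / (4 * k)) = s.card - s.card / (4 * k) := by
      field_simp
    rw [hexp] at hfin
    linarith
  obtain ⟨f, hfinj, hfS⟩ := (Finset.all_card_le_biUnion_card_iff_exists_injective S).mp hall
  refine ⟨f, hfinj, fun i => ?_⟩
  have := hfS i
  simp only [hS, Finset.mem_filter, Finset.mem_univ, true_and] at this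
  exact this
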